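/- Let M ⊆ ℤ be a nonempty integer interval and let (λ_k)_{k∈M}, (μ_k)_{k∈M} be interlaced real sequences with no finite accumulation point such that Σ_{k∈M}(μ_k − λ_k) < ∞. Assume additionally that λ_k ≠ 0, μ_k ≠ 0, and λ_k·μ_k > 0 for every k ∈ M. Then the infinite product C := ∏_{k∈M} μ_k/λ_k converges (is multipliable), for every nonreal ζ the products ∏_{k∈M} (1 − ζ/μ_k)·(1 − ζ/λ_k)^{-1} and ∏_{k∈M} (μ_k − ζ)/(λ_k − ζ) converge, and C · ∏_{k∈M} (1 − ζ/μ_k)·(1 − ζ/λ_k)^{-1} = ∏_{k∈M} (μ_k − ζ)/(λ_k − ζ). -/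

import Mathlib

open Filter Topology

private lemma aux_mult {ι : Type*} (f : ι → ℂ) (h0 : ∀ k, f k ≠ 0)
    (h : Summable fun k => ‖f k - 1‖) :
    Multipliable f ∧ Summable (fun k => ‖Complex.log (f k)‖) := by
  have hev : ∀ᶠ k in Filter.cofinite, ‖f k - 1‖ ≤ 1/2 :=
    h.tendsto_cofinite_zero.eventually (eventually_le_nhds (by norm_num))
  have hnorm : Summable (fun k => ‖Complex.log (f k)‖) := by
    apply Summable.of_norm_bounded_eventually (h.mul_left (3/2))
    filter_upwards [hev] with k hk
    have h1 : ‖Complex.log (1 + (f k - 1))‖ ≤ 3/2 * ‖f k - 1‖ :=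
      Complex.norm_log_one_add_half_le_self hk
    have h2 : (1 : ℂ) + (f k - 1) = f k := by ring
    rw [h2] at h1
    simpa [norm_norm] using h1
  exact ⟨Complex.multipliable_of_summable_log hnorm.of_norm, hnorm⟩

/-- For interlaced sequences with summable gaps whose members are all
nonzero and of equal sign within each pair, the product C = ∏_{k∈M} μ_k/λ_k converges,
and for every nonreal ζ the products ∏ (1 − ζ/μ_k)(1 − ζ/λ_k)⁻¹ and
∏ (μ_k − ζ)/(λ_k − ζ) converge with C · ∏ (1 − ζ/μ_k)(1 − ζ/λ_k)⁻¹ =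
∏ (μ_k − ζ)/(λ_k − ζ). -/
theorem two_spectra_product_normalization
    (M : Set ℤ) (hM : M.Nonempty)
    (hMint : ∀ a b c : ℤ, a ∈ M → c ∈ M → a ≤ b → b ≤ c → b ∈ M)
    (lam mu : ℤ → ℝ)
    (hinter₁ : ∀ k ∈ M, lam k < mu k)
    (hinter₂ : ∀ k : ℤ, k ∈ M → k + 1 ∈ M → mu k < lam (k + 1))
    (hacc : ∀ R : ℝ, 0 < R → {k ∈ M | |lam k| ≤ R}.Finite)
    (hsum : Summable (fun k : M => mu (k : ℤ) - lam (k : ℤ)))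
    (hlam : ∀ k ∈ M, lam k ≠ 0)
    (hmu : ∀ k ∈ M, mu k ≠ 0)
    (hsign : ∀ k ∈ M, 0 < lam k * mu k) :
    Multipliable (fun k : M => mu (k : ℤ) / lam (k : ℤ)) ∧
    ∀ ζ : ℂ, ζ.im ≠ 0 →
      Multipliable
        (fun k : M => (1 - ζ / (mu (k : ℤ) : ℂ)) * (1 - ζ / (lam (k : ℤ) : ℂ))⁻¹) ∧
      Multipliable (fun k : M => ((mu (k : ℤ) : ℂ) - ζ) / ((lam (k : ℤ) : ℂ) - ζ)) ∧
      ((∏' k : M, mu (k : ℤ) / lam (k : ℤ) : ℝ) : ℂ) *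
          ∏' k : M, (1 - ζ / (mu (k : ℤ) : ℂ)) * (1 - ζ / (lam (k : ℤ) : ℂ))⁻¹ =
        ∏' k : M, ((mu (k : ℤ) : ℂ) - ζ) / ((lam (k : ℤ) : ℂ) - ζ) := by
  have hd : ∀ k : M, 0 < mu (k : ℤ) - lam (k : ℤ) := fun k => sub_pos.2 (hinter₁ k k.2)
  have hlam' : ∀ k : M, lam (k : ℤ) ≠ 0 := fun k => hlam k k.2
  have hmu' : ∀ k : M, mu (k : ℤ) ≠ 0 := fun k => hmu k k.2
  have habs : ∀ k : M, |lam (k : ℤ)| - (mu (k : ℤ) - lam (k : ℤ)) ≤ |mu (k : ℤ)| := by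
    intro k
    rcases (hlam' k).lt_or_gt with hneg | hpos
    · have hmuneg : mu (k : ℤ) < 0 := by nlinarith [hsign k k.2]
      rw [abs_of_neg hneg, abs_of_neg hmuneg]; linarith
    · have hmupos : 0 < mu (k : ℤ) := by nlinarith [hsign k k.2]
      rw [abs_of_pos hpos, abs_of_pos hmupos]; linarith [hinter₁ k k.2]
  have hev1 : ∀ᶠ k : M in cofinite, mu (k : ℤ) - lam (k : ℤ) ≤ 1 :=
    hsum.tendsto_cofinite_zero.eventually (eventually_le_nhds one_pos)
  have hev2 : ∀ᶠ k : M in cofinite, 2 ≤ |lam (k : ℤ)| := by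
    rw [eventually_cofinite]
    refine Set.Finite.subset ((hacc 2 two_pos).preimage Subtype.val_injective.injOn) ?_
    intro k hk
    simp only [Set.mem_setOf_eq, not_le] at hk
    simp only [Set.mem_preimage, Set.mem_setOf_eq]
    exact ⟨k.2, hk.le⟩
  have hev : ∀ᶠ k : M in cofinite, 1 ≤ |lam (k : ℤ)| ∧ 1 ≤ |mu (k : ℤ)| := by
    filter_upwards [hev1, hev2] with k h1 h2
    have := habs k
    constructor <;> linarith
  -- complex version of mu/lam
  obtain ⟨m1C, hlogC⟩ : Multipliable (fun k : M => ((mu (k : ℤ) / lam (k : ℤ) : ℝ) : ℂ)) ∧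
      Summable (fun k : M => ‖Complex.log ((mu (k : ℤ) / lam (k : ℤ) : ℝ) : ℂ)‖) := by
    apply aux_mult
    · intro k
      exact Complex.ofReal_ne_zero.2 (div_ne_zero (hmu' k) (hlam' k))
    · apply Summable.of_norm_bounded_eventually
        (g := fun k : M => mu (k : ℤ) - lam (k : ℤ)) hsum
      filter_upwards [hev] with k hk
      have hre : mu (k : ℤ) / lam (k : ℤ) - 1 = (mu (k : ℤ) - lam (k : ℤ)) / lam (k : ℤ) := by
        field_simp [hlam' k]
      have heq : ((mu (k : ℤ) / lam (k : ℤ) : ℝ) : ℂ) - 1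
          = (((mu (k : ℤ) - lam (k : ℤ)) / lam (k : ℤ) : ℝ) : ℂ) := by
        rw [← hre]; push_cast; ring
      rw [norm_norm, heq, Complex.norm_real, Real.norm_eq_abs, abs_div,
        abs_of_pos (hd k)]
      exact div_le_self (hd k).le hk.1
  -- real multipliability
  have hpos : ∀ k : M, 0 < mu (k : ℤ) / lam (k : ℤ) := by
    intro k
    have h2 : mu (k : ℤ) / lam (k : ℤ) = (lam (k : ℤ) * mu (k : ℤ)) / (lam (k : ℤ)) ^ 2 := by
      field_simp [hlam' k]
    rw [h2]
    exact div_pos (hsign k k.2) (pow_two_pos_of_ne_zero (hlam' k))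
  have hlogR : Summable (fun k : M => Real.log (mu (k : ℤ) / lam (k : ℤ))) := by
    apply Summable.of_norm_bounded hlogC
    intro k
    rw [Real.norm_eq_abs, ← Complex.ofReal_log (hpos k).le, Complex.norm_real,
      Real.norm_eq_abs]
  have m1 : Multipliable (fun k : M => mu (k : ℤ) / lam (k : ℤ)) :=
    Real.multipliable_of_summable_log hpos hlogR
  refine ⟨m1, fun ζ hζ => ?_⟩
  have himpos : 0 < |ζ.im| := abs_pos.2 hζ
  have hζlam : ∀ k : M, ((lam (k : ℤ) : ℂ) - ζ) ≠ 0 := by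
    intro k h
    apply hζ
    have := congrArg Complex.im h
    simpa using this
  have hζmu : ∀ k : M, ((mu (k : ℤ) : ℂ) - ζ) ≠ 0 := by
    intro k h
    apply hζ
    have := congrArg Complex.im h
    simpa using this
  have him : ∀ k : M, |ζ.im| ≤ ‖(lam (k : ℤ) : ℂ) - ζ‖ := by
    intro k
    have h1 := Complex.abs_im_le_norm ((lam (k : ℤ) : ℂ) - ζ)
    simpa [Complex.sub_im] using h1
  have hcastd : ∀ k : M, ‖(mu (k : ℤ) : ℂ) - (lam (k : ℤ) : ℂ)‖ = mu (k : ℤ) - lam (k : ℤ) := by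
    intro k
    rw [show (mu (k : ℤ) : ℂ) - (lam (k : ℤ) : ℂ) = ((mu (k : ℤ) - lam (k : ℤ) : ℝ) : ℂ) by
      push_cast; ring, Complex.norm_real, Real.norm_eq_abs, abs_of_pos (hd k)]
  have hCmu : ∀ k : M, (mu (k : ℤ) : ℂ) ≠ 0 := fun k => Complex.ofReal_ne_zero.2 (hmu' k)
  have hClam : ∀ k : M, (lam (k : ℤ) : ℂ) ≠ 0 := fun k => Complex.ofReal_ne_zero.2 (hlam' k)
  have hone : ∀ k : M, (1 : ℂ) - ζ / (lam (k : ℤ) : ℂ) = ((lam (k : ℤ) : ℂ) - ζ) / (lam (k : ℤ) : ℂ) := by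
    intro k
    field_simp [hClam k]
  have honemu : ∀ k : M, (1 : ℂ) - ζ / (mu (k : ℤ) : ℂ) = ((mu (k : ℤ) : ℂ) - ζ) / (mu (k : ℤ) : ℂ) := by
    intro k
    field_simp [hCmu k]
  -- key algebraic identities
  have key2 : ∀ k : M, (1 - ζ / (mu (k : ℤ) : ℂ)) * (1 - ζ / (lam (k : ℤ) : ℂ))⁻¹ - 1
      = ζ * ((mu (k : ℤ) : ℂ) - (lam (k : ℤ) : ℂ)) / ((mu (k : ℤ) : ℂ) * ((lam (k : ℤ) : ℂ) - ζ)) := by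
    intro k
    rw [hone k, inv_div, honemu k]
    field_simp [hCmu k, hClam k, hζlam k]
    ring
  have h02 : ∀ k : M, (1 - ζ / (mu (k : ℤ) : ℂ)) * (1 - ζ / (lam (k : ℤ) : ℂ))⁻¹ ≠ 0 := by
    intro k
    apply mul_ne_zero
    · rw [honemu k]; exact div_ne_zero (hζmu k) (hCmu k)
    · rw [hone k]; exact inv_ne_zero (div_ne_zero (hζlam k) (hClam k))
  have m2 : Multipliable
      (fun k : M => (1 - ζ / (mu (k : ℤ) : ℂ)) * (1 - ζ / (lam (k : ℤ) : ℂ))⁻¹) := by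
    refine (aux_mult _ h02 ?_).1
    apply Summable.of_norm_bounded_eventually
      (g := fun k : M => ‖ζ‖ / |ζ.im| * (mu (k : ℤ) - lam (k : ℤ))) (hsum.mul_left _)
    filter_upwards [hev] with k hk
    rw [norm_norm, key2 k, norm_div, norm_mul, norm_mul, hcastd k, Complex.norm_real,
      Real.norm_eq_abs]
    calc ‖ζ‖ * (mu (k : ℤ) - lam (k : ℤ)) / (|mu (k : ℤ)| * ‖(lam (k : ℤ) : ℂ) - ζ‖)
        ≤ ‖ζ‖ * (mu (k : ℤ) - lam (k : ℤ)) / (1 * |ζ.im|) :=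
          div_le_div_of_nonneg_left (mul_nonneg (norm_nonneg _) (hd k).le)
            (by rw [one_mul]; exact himpos)
            (mul_le_mul hk.2 (him k) (abs_nonneg _) ((by norm_num : (0:ℝ) ≤ 1).trans hk.2))
      _ = ‖ζ‖ / |ζ.im| * (mu (k : ℤ) - lam (k : ℤ)) := by rw [one_mul]; ring
  have key3 : ∀ k : M, ((mu (k : ℤ) : ℂ) - ζ) / ((lam (k : ℤ) : ℂ) - ζ) - 1
      = ((mu (k : ℤ) : ℂ) - (lam (k : ℤ) : ℂ)) / ((lam (k : ℤ) : ℂ) - ζ) := by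
    intro k
    field_simp [hζlam k]
    ring
  have m3 : Multipliable (fun k : M => ((mu (k : ℤ) : ℂ) - ζ) / ((lam (k : ℤ) : ℂ) - ζ)) := by
    refine (aux_mult _ (fun k => div_ne_zero (hζmu k) (hζlam k)) ?_).1
    apply Summable.of_norm_bounded (hsum.mul_left (1 / |ζ.im|))
    intro k
    rw [norm_norm, key3 k, norm_div, hcastd k]
    calc (mu (k : ℤ) - lam (k : ℤ)) / ‖(lam (k : ℤ) : ℂ) - ζ‖
        ≤ (mu (k : ℤ) - lam (k : ℤ)) / |ζ.im| :=
          div_le_div_of_nonneg_left (hd k).le himpos (him k)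
      _ = 1 / |ζ.im| * (mu (k : ℤ) - lam (k : ℤ)) := by ring
  refine ⟨m2, m3, ?_⟩
  have hcastp : ((∏' k : M, mu (k : ℤ) / lam (k : ℤ) : ℝ) : ℂ)
      = ∏' k : M, ((mu (k : ℤ) / lam (k : ℤ) : ℝ) : ℂ) :=
    m1.map_tprod Complex.ofRealHom.toMonoidHom Complex.continuous_ofReal
  rw [hcastp, ← Multipliable.tprod_mul m1C m2]
  refine tprod_congr fun k => ?_
  rw [hone k, inv_div, honemu k]
  push_cast
  field_simp [hCmu k, hClam k, hζlam k]
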